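/- Let N be the total number of codewords of a random code from the two edge type LDPC ensemble with n variable nodes, node-perspective variable degree distribution Λ and check degree distributions Γ^{(1)}, Γ^{(2)}. Then E(N) = Σ_{E1, E2} coef[ Π_{l1,l2} (1 + u1^{l1} u2^{l2})^{n Λ_{l1 l2}}; u1^{E1} u2^{E2} ] · coef[ Π_{r1} q_{r1}(v1)^{m1 Γ^{(1)}_{r1}} Π_{r2} q_{r2}(v2)^{m2 Γ^{(2)}_{r2}}; v1^{E1} v2^{E2} ] / ( C(nΛ'_1(1,1), E1) C(nΛ'_2(1,1), E2) ), where Λ'_j(1,1) = Σ_{l1,l2} l_j Λ_{l1 l2}, m_j = nΛ'_j(1,1)/Γ'^{(j)}(1), and q_r(v) = ((1+v)^r + (1−v)^r)/2. -/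

import Mathlib

open Finset MvPolynomial

/-- Variable-side sockets of a node-degree function `d`. -/
abbrev EdgeSocket (n : ℕ) (d : Fin n → ℕ) := Σ v : Fin n, Fin (d v)

/-- Number of codewords of the two edge type LDPC code determined by the two socket
matchings `π1, π2`: assignments `x` of bits to variable nodes such that every check
node (of either type) has even parity. -/
noncomputable def numCodewords (n c1 c2 : ℕ) (d1 d2 : Fin n → ℕ)
    (g1 : Fin c1 → ℕ) (g2 : Fin c2 → ℕ)
    (π1 : EdgeSocket n d1 ≃ EdgeSocket c1 g1)
    (π2 : EdgeSocket n d2 ≃ EdgeSocket c2 g2) : ℕ :=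
  (Finset.univ.filter (fun x : Fin n → ZMod 2 =>
      (∀ c : Fin c1, ∑ s : Fin (g1 c), x (π1.symm ⟨c, s⟩).1 = 0) ∧
      (∀ c : Fin c2, ∑ s : Fin (g2 c), x (π2.symm ⟨c, s⟩).1 = 0))).card

/-- `q_r` in the variable `X j`, as a bivariate polynomial:
`q_r(v) = ((1+v)^r + (1-v)^r)/2`. -/
noncomputable def qMv (r : ℕ) (j : Fin 2) : MvPolynomial (Fin 2) ℝ :=
  MvPolynomial.C (1 / 2 : ℝ) *
    ((1 + MvPolynomial.X j) ^ r + (1 - MvPolynomial.X j) ^ r)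

/-- The monomial exponent `u1^{E1} u2^{E2}`. -/
noncomputable def mono2 (E1 E2 : ℕ) : Fin 2 →₀ ℕ :=
  Finsupp.single 0 E1 + Finsupp.single 1 E2

/-- Equivs compatible with predicates split as a pair of equivs on subtypes. -/
def compatEquiv {α β : Type*} (p : α → Prop) (q : β → Prop)
    [DecidablePred p] [DecidablePred q] :
    {e : α ≃ β // ∀ a, p a ↔ q (e a)} ≃
      ({a // p a} ≃ {b // q b}) × ({a // ¬ p a} ≃ {b // ¬ q b}) where
  toFun e := (e.1.subtypeEquiv e.2, e.1.subtypeEquiv (fun a => not_congr (e.2 a)))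
  invFun f := ⟨(Equiv.sumCompl p).symm.trans ((f.1.sumCongr f.2).trans (Equiv.sumCompl q)), by
    intro a
    by_cases h : p a
    · rw [Equiv.trans_apply, Equiv.sumCompl_symm_apply_of_pos h]
      simp [h, (f.1 ⟨a, h⟩).2]
    · rw [Equiv.trans_apply, Equiv.sumCompl_symm_apply_of_neg h]
      simpa [h] using (f.2 ⟨a, h⟩).2⟩
  left_inv e := by
    ext a
    by_cases h : p a
    · simp [Equiv.sumCompl_symm_apply_of_pos h]
    · simp [Equiv.sumCompl_symm_apply_of_neg h]
  right_inv f := by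
    refine Prod.ext ?_ ?_
    · ext a; simp [Equiv.sumCompl_symm_apply_of_pos a.2]
    · ext a; simp [Equiv.sumCompl_symm_apply_of_neg a.2]

lemma card_compat {α β : Type*} [Fintype α] [Fintype β] [DecidableEq α] [DecidableEq β]
    (p : α → Prop) (q : β → Prop) [DecidablePred p] [DecidablePred q]
    (h1 : Fintype.card {a // p a} = Fintype.card {b // q b})
    (h2 : Fintype.card {a // ¬ p a} = Fintype.card {b // ¬ q b}) :
    Fintype.card {e : α ≃ β // ∀ a, p a ↔ q (e a)}
      = (Fintype.card {a // p a}).factorial * (Fintype.card {a // ¬ p a}).factorial := by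
  rw [Fintype.card_congr (compatEquiv p q), Fintype.card_prod,
    Fintype.card_equiv (Fintype.equivOfCardEq h1), Fintype.card_equiv (Fintype.equivOfCardEq h2)]

lemma card_compat_zero {α β : Type*} [Fintype α] [Fintype β] [DecidableEq α] [DecidableEq β]
    (p : α → Prop) (q : β → Prop) [DecidablePred p] [DecidablePred q]
    (h1 : Fintype.card {a // p a} ≠ Fintype.card {b // q b}) :
    Fintype.card {e : α ≃ β // ∀ a, p a ↔ q (e a)} = 0 := by
  rw [Fintype.card_eq_zero_iff]
  refine ⟨fun e => h1 (Fintype.card_congr (e.1.subtypeEquiv e.2))⟩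

lemma coeff_X0_pow_mul_X1_pow (a b E1 E2 : ℕ) :
    MvPolynomial.coeff (mono2 E1 E2) ((X 0 : MvPolynomial (Fin 2) ℝ) ^ a * X 1 ^ b)
      = if a = E1 ∧ b = E2 then 1 else 0 := by
  rw [X_pow_eq_monomial, X_pow_eq_monomial, monomial_mul, coeff_monomial, mul_one]
  congr 1
  rw [eq_iff_iff]
  constructor
  · intro h
    have h0 := DFunLike.congr_fun h (0 : Fin 2)
    have h1 := DFunLike.congr_fun h (1 : Fin 2)
    simp [mono2, Finsupp.single_apply] at h0 h1
    exact ⟨h0, h1⟩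
  · rintro ⟨rfl, rfl⟩; rfl

lemma pow_expand (r : ℕ) (x : MvPolynomial (Fin 2) ℝ) :
    (x + 1) ^ r = ∑ S ∈ (univ : Finset (Fin r)).powerset, x ^ S.card := by
  have h : (x + 1) ^ r = ∏ _i : Fin r, (x + 1) := by simp [Finset.prod_const]
  rw [h, Finset.prod_add]
  refine Finset.sum_congr rfl fun S _ => by simp [Finset.prod_const]

lemma qMv_expand (r : ℕ) (j : Fin 2) :
    qMv r j = ∑ S ∈ (univ : Finset (Fin r)).powerset,
      (if Even S.card then 1 else 0) * X j ^ S.card := by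
  have h1 : (1 + X j : MvPolynomial (Fin 2) ℝ) ^ r
      = ∑ S ∈ (univ : Finset (Fin r)).powerset, X j ^ S.card := by
    rw [add_comm]; exact pow_expand r _
  have h2 : (1 - X j : MvPolynomial (Fin 2) ℝ) ^ r
      = ∑ S ∈ (univ : Finset (Fin r)).powerset, (-1 : MvPolynomial (Fin 2) ℝ) ^ S.card * X j ^ S.card := by
    have : (1 - X j : MvPolynomial (Fin 2) ℝ) = -X j + 1 := by ring
    rw [this, pow_expand]
    refine Finset.sum_congr rfl fun S _ => by rw [neg_pow]
  rw [qMv, h1, h2, ← Finset.sum_add_distrib, Finset.mul_sum]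
  refine Finset.sum_congr rfl fun S _ => ?_
  rcases Nat.even_or_odd S.card with h | h
  · rw [h.neg_one_pow, if_pos h]
    ring_nf
    rw [((map_ofNat C 2).symm : (2 : MvPolynomial (Fin 2) ℝ) = C 2), mul_right_comm, ← map_mul]
    norm_num
  · rw [h.neg_one_pow, if_neg (Nat.not_even_iff_odd.2 h)]
    ring_nf
/-- Families of subsets of check sockets, one per check node. -/
def famSet (c : ℕ) (g : Fin c → ℕ) : Finset (∀ i : Fin c, Finset (Fin (g i))) :=
  Fintype.piFinset (fun i => (univ : Finset (Fin (g i))).powerset)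

/-- Number of even families with total size `E`. -/
def NE (c : ℕ) (g : Fin c → ℕ) (E : ℕ) : ℕ :=
  ((famSet c g).filter
    (fun fam => (∀ i, Even (fam i).card) ∧ ∑ i, (fam i).card = E)).card

lemma checkProd (c : ℕ) (g : Fin c → ℕ) (j : Fin 2) :
    (∏ i : Fin c, qMv (g i) j)
      = ∑ fam ∈ famSet c g,
          (if ∀ i, Even (fam i).card then 1 else 0) * X j ^ (∑ i, (fam i).card) := by
  simp only [qMv_expand]
  rw [Finset.prod_univ_sum]
  refine Finset.sum_congr rfl fun fam _ => ?_
  rw [Finset.prod_mul_distrib, Finset.prod_pow_eq_pow_sum, Finset.prod_boole]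
  simp

lemma coeff_checkProd (c1 c2 : ℕ) (g1 : Fin c1 → ℕ) (g2 : Fin c2 → ℕ) (E1 E2 : ℕ) :
    MvPolynomial.coeff (mono2 E1 E2)
        ((∏ i : Fin c1, qMv (g1 i) 0) * (∏ i : Fin c2, qMv (g2 i) 1))
      = (NE c1 g1 E1 : ℝ) * (NE c2 g2 E2 : ℝ) := by
  rw [checkProd, checkProd, Finset.sum_mul_sum]
  simp only [MvPolynomial.coeff_sum]
  have key : ∀ f1 ∈ famSet c1 g1, ∀ f2 ∈ famSet c2 g2,
      MvPolynomial.coeff (mono2 E1 E2)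
        (((if ∀ i, Even (f1 i).card then (1:MvPolynomial (Fin 2) ℝ) else 0) * X 0 ^ (∑ i, (f1 i).card)) *
         ((if ∀ i, Even (f2 i).card then 1 else 0) * X 1 ^ (∑ i, (f2 i).card)))
      = (if (∀ i, Even (f1 i).card) ∧ ∑ i, (f1 i).card = E1 then (1:ℝ) else 0) *
        (if (∀ i, Even (f2 i).card) ∧ ∑ i, (f2 i).card = E2 then (1:ℝ) else 0) := by
    intro f1 _ f2 _
    by_cases h1 : ∀ i, Even (f1 i).card <;> by_cases h2 : ∀ i, Even (f2 i).card <;>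
      simp [h1, h2, mul_comm, mul_assoc, mul_left_comm]
    · rw [coeff_X0_pow_mul_X1_pow]
      by_cases ha : ∑ i, (f1 i).card = E1 <;> by_cases hb : ∑ i, (f2 i).card = E2 <;>
        simp [ha, hb]
  calc (∑ f1 ∈ famSet c1 g1, ∑ f2 ∈ famSet c2 g2, MvPolynomial.coeff (mono2 E1 E2) _)
      = ∑ f1 ∈ famSet c1 g1, ∑ f2 ∈ famSet c2 g2,
          (if (∀ i, Even (f1 i).card) ∧ ∑ i, (f1 i).card = E1 then (1:ℝ) else 0) *
          (if (∀ i, Even (f2 i).card) ∧ ∑ i, (f2 i).card = E2 then (1:ℝ) else 0) := by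
        refine Finset.sum_congr rfl fun f1 h1 => Finset.sum_congr rfl fun f2 h2 => key f1 h1 f2 h2
    _ = (NE c1 g1 E1 : ℝ) * (NE c2 g2 E2 : ℝ) := by
        rw [← Finset.sum_mul_sum, Finset.sum_boole, Finset.sum_boole]
        rfl
lemma varProd_coeff (n : ℕ) (d1 d2 : Fin n → ℕ) (E1 E2 : ℕ) :
    MvPolynomial.coeff (mono2 E1 E2)
        (∏ v : Fin n, (1 + (X 0 : MvPolynomial (Fin 2) ℝ) ^ d1 v * X 1 ^ d2 v))
      = (((univ : Finset (Fin n)).powerset.filter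
          (fun A => (∑ v ∈ A, d1 v) = E1 ∧ (∑ v ∈ A, d2 v) = E2)).card : ℝ) := by
  have hexp : (∏ v : Fin n, (1 + (X 0 : MvPolynomial (Fin 2) ℝ) ^ d1 v * X 1 ^ d2 v))
      = ∑ A ∈ (univ : Finset (Fin n)).powerset,
          (X 0 : MvPolynomial (Fin 2) ℝ) ^ (∑ v ∈ A, d1 v) * X 1 ^ (∑ v ∈ A, d2 v) := by
    have : ∀ v : Fin n, (1 + (X 0 : MvPolynomial (Fin 2) ℝ) ^ d1 v * X 1 ^ d2 v)
        = ((X 0 : MvPolynomial (Fin 2) ℝ) ^ d1 v * X 1 ^ d2 v) + 1 := fun v => add_comm _ _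
    rw [Finset.prod_congr rfl (fun v _ => this v), Finset.prod_add]
    refine Finset.sum_congr rfl fun A _ => ?_
    rw [Finset.prod_const_one, mul_one, Finset.prod_mul_distrib, Finset.prod_pow_eq_pow_sum,
      Finset.prod_pow_eq_pow_sum]
  rw [hexp, MvPolynomial.coeff_sum]
  simp only [coeff_X0_pow_mul_X1_pow]
  rw [Finset.sum_boole]

lemma parity_lemma {m : ℕ} (y : Fin m → ZMod 2) :
    (∑ s, y s = 0) ↔ Even (univ.filter (fun s => y s = 1)).card := by
  have hy : ∀ a : ZMod 2, a = if a = 1 then 1 else 0 := by decide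
  have : (∑ s, y s) = ((univ.filter (fun s => y s = 1)).card : ZMod 2) := by
    rw [Finset.sum_congr rfl (fun s _ => hy (y s)), Finset.sum_boole]
  rw [this, ZMod.natCast_eq_zero_iff]; exact even_iff_two_dvd.symm

lemma card_sigma_filter_fst {n : ℕ} (d : Fin n → ℕ) (x : Fin n → ZMod 2) :
    Fintype.card {a : EdgeSocket n d // x a.1 = 1}
      = ∑ v ∈ univ.filter (fun v => x v = 1), d v := by
  rw [Fintype.card_subtype, Finset.card_filter, ← Finset.univ_sigma_univ, Finset.sum_sigma]
  rw [Finset.sum_filter]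
  refine Finset.sum_congr rfl fun v _ => ?_
  by_cases h : x v = 1 <;> simp [h]

lemma card_sigma_mem {c : ℕ} (g : Fin c → ℕ) (fam : ∀ i : Fin c, Finset (Fin (g i))) :
    Fintype.card {t : EdgeSocket c g // t.2 ∈ fam t.1} = ∑ i, (fam i).card := by
  rw [Fintype.card_subtype, Finset.card_filter, ← Finset.univ_sigma_univ, Finset.sum_sigma]
  refine Finset.sum_congr rfl fun i _ => ?_
  rw [← Finset.card_filter]
  congr 1
  ext s
  simp
section GoodCount

variable {n c : ℕ} (d : Fin n → ℕ) (g : Fin c → ℕ) (x : Fin n → ZMod 2)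

/-- The family of "one"-sockets on the check side induced by a matching. -/
def famOf (π : EdgeSocket n d ≃ EdgeSocket c g) : ∀ i : Fin c, Finset (Fin (g i)) :=
  fun i => univ.filter (fun s => x (π.symm ⟨i, s⟩).1 = 1)

lemma famOf_mem (π : EdgeSocket n d ≃ EdgeSocket c g) : famOf d g x π ∈ famSet c g := by
  rw [famSet, Fintype.mem_piFinset]
  exact fun i => Finset.mem_powerset.2 (Finset.subset_univ _)

lemma famOf_eq_iff (π : EdgeSocket n d ≃ EdgeSocket c g)
    (fam : ∀ i : Fin c, Finset (Fin (g i))) :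
    famOf d g x π = fam ↔ ∀ a : EdgeSocket n d, (x a.1 = 1) ↔ (π a).2 ∈ fam (π a).1 := by
  constructor
  · rintro rfl a
    simp only [famOf, Finset.mem_filter, Finset.mem_univ, true_and]
    rw [Sigma.eta, Equiv.symm_apply_apply]
  · intro h
    funext i
    ext s
    simp only [famOf, Finset.mem_filter, Finset.mem_univ, true_and]
    have := h (π.symm ⟨i, s⟩)
    rwa [Equiv.apply_symm_apply] at this
  
set_option maxHeartbeats 1000000 in
lemma good_count (hTg : ∑ v, d v = ∑ i, g i) :
    (univ.filter (fun π : EdgeSocket n d ≃ EdgeSocket c g =>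
        ∀ ch : Fin c, ∑ s : Fin (g ch), x (π.symm ⟨ch, s⟩).1 = 0)).card
      = NE c g (∑ v ∈ univ.filter (fun v => x v = 1), d v)
        * (∑ v ∈ univ.filter (fun v => x v = 1), d v).factorial
        * ((∑ v, d v) - ∑ v ∈ univ.filter (fun v => x v = 1), d v).factorial := by
  set Ex := ∑ v ∈ univ.filter (fun v => x v = 1), d v with hEx
  set T := ∑ v, d v with hTdef
  set good := fun π : EdgeSocket n d ≃ EdgeSocket c g =>
      ∀ ch : Fin c, ∑ s : Fin (g ch), x (π.symm ⟨ch, s⟩).1 = 0 with hgood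
  -- good in terms of parity of famOf
  have hgoodiff : ∀ π, good π ↔ ∀ ch, Even ((famOf d g x π ch).card) := by
    intro π
    exact forall_congr' fun ch => parity_lemma _
  -- fiberwise decomposition
  have hfib : (univ.filter good).card
      = ∑ fam ∈ famSet c g, ((univ.filter good).filter (fun π => famOf d g x π = fam)).card := by
    simp only [Finset.card_eq_sum_ones]
    exact (Finset.sum_fiberwise_of_maps_to (fun π _ => famOf_mem d g x π) _).symm
  -- per-fiber count
  have hfiber : ∀ fam ∈ famSet c g,
      ((univ.filter good).filter (fun π => famOf d g x π = fam)).card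
      = if (∀ i, Even (fam i).card) ∧ (∑ i, (fam i).card) = Ex
          then Ex.factorial * (T - Ex).factorial else 0 := by
    intro fam _
    by_cases he : ∀ i, Even (fam i).card
    · -- the filter on good is redundant on this fiber
      have hset : (univ.filter good).filter (fun π => famOf d g x π = fam)
          = univ.filter (fun π => famOf d g x π = fam) := by
        rw [Finset.filter_filter]
        refine Finset.filter_congr fun π _ => ?_
        constructor
        · rintro ⟨_, h2⟩; exact h2
        · rintro h2; exact ⟨(hgoodiff π).2 (by rw [h2]; exact he), h2⟩
      rw [hset]
      have hcard : (univ.filter (fun π => famOf d g x π = fam)).card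
          = Fintype.card {π : EdgeSocket n d ≃ EdgeSocket c g //
              ∀ a : EdgeSocket n d, (x a.1 = 1) ↔ (π a).2 ∈ fam (π a).1} := by
        rw [Fintype.card_subtype]
        congr 1
        exact Finset.filter_congr fun π _ => famOf_eq_iff d g x π fam
      rw [hcard]
      have hcardP : Fintype.card {a : EdgeSocket n d // x a.1 = 1} = Ex :=
        card_sigma_filter_fst d x
      have hcardQ : Fintype.card {t : EdgeSocket c g // t.2 ∈ fam t.1}
          = ∑ i, (fam i).card := card_sigma_mem g fam
      by_cases hs : (∑ i, (fam i).card) = Ex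
      · rw [if_pos ⟨he, hs⟩]
        have hExT : Ex ≤ T := Finset.sum_le_sum_of_subset (Finset.filter_subset _ _)
        have hcα : Fintype.card (EdgeSocket n d) = T := by
          simp only [Fintype.card_sigma, Fintype.card_fin]; rfl
        have hcβ : Fintype.card (EdgeSocket c g) = T := by
          simp only [Fintype.card_sigma, Fintype.card_fin]; exact hTg.symm
        have h1 : Fintype.card {a : EdgeSocket n d // x a.1 = 1}
            = Fintype.card {t : EdgeSocket c g // t.2 ∈ fam t.1} := by
          rw [hcardP, hcardQ, hs]
        have h2 : Fintype.card {a : EdgeSocket n d // ¬ x a.1 = 1}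
            = Fintype.card {t : EdgeSocket c g // ¬ t.2 ∈ fam t.1} := by
          rw [Fintype.card_subtype_compl, Fintype.card_subtype_compl, hcardP, hcardQ, hs,
            hcα, hcβ]
        rw [card_compat (fun a : EdgeSocket n d => x a.1 = 1) (fun t : EdgeSocket c g => t.2 ∈ fam t.1) h1 h2, hcardP, Fintype.card_subtype_compl, hcardP, hcα]
      · rw [if_neg (fun hc => hs hc.2)]
        refine card_compat_zero (fun a : EdgeSocket n d => x a.1 = 1) (fun t : EdgeSocket c g => t.2 ∈ fam t.1) ?_
        rw [hcardP, hcardQ]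
        exact fun hc => hs (by rw [← hc])
    · rw [if_neg (fun hc => he hc.1)]
      rw [Finset.card_eq_zero, Finset.filter_filter, Finset.filter_eq_empty_iff]
      rintro π -
      rintro ⟨hg, hf⟩
      exact he (by rw [← hf]; exact (hgoodiff π).1 hg)
  rw [hfib, Finset.sum_congr rfl hfiber, ← Finset.sum_filter, Finset.sum_const,
    smul_eq_mul, NE, mul_assoc]

end GoodCount

lemma frac_id (T E N : ℕ) (hE : E ≤ T) :
    ((N : ℝ) * E.factorial * (T - E).factorial) / T.factorial
      = N / (T.choose E) := by
  have h := Nat.choose_mul_factorial_mul_factorial hE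
  have hc : ((T.choose E : ℕ) : ℝ) ≠ 0 :=
    Nat.cast_ne_zero.2 (Nat.choose_pos hE).ne'
  have hf : ((T.factorial : ℕ) : ℝ) ≠ 0 := Nat.cast_ne_zero.2 T.factorial_ne_zero
  rw [div_eq_div_iff hf hc]
  have : (T.factorial : ℝ) = (T.choose E : ℝ) * E.factorial * (T - E).factorial := by
    rw [← Nat.cast_mul, ← Nat.cast_mul, h]
  rw [this]; ring

/-- Reindexing sums over `Fin n → ZMod 2` by the support set. -/
lemma sum_zmod_reindex {n : ℕ} (H : Finset (Fin n) → ℝ) :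
    (∑ x : Fin n → ZMod 2, H (univ.filter (fun v => x v = 1)))
      = ∑ A ∈ (univ : Finset (Fin n)).powerset, H A := by
  refine Finset.sum_nbij' (fun x => univ.filter (fun v => x v = 1))
    (fun A v => if v ∈ A then 1 else 0) (fun x _ => Finset.mem_powerset.2 (Finset.filter_subset _ _))
    (fun A _ => Finset.mem_univ _) ?_ ?_ ?_
  · intro x _
    funext v
    have : ∀ a : ZMod 2, a ≠ 1 → a = 0 := by decide
    by_cases h : x v = 1 <;> simp [h]
    exact (this _ h).symm
  · intro A _
    ext v
    by_cases h : v ∈ A <;> simp [h]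
  · intro x _
    rfl

lemma numerator_swap (n c1 c2 : ℕ) (d1 d2 : Fin n → ℕ)
    (g1 : Fin c1 → ℕ) (g2 : Fin c2 → ℕ) :
    (∑ π1 : EdgeSocket n d1 ≃ EdgeSocket c1 g1,
       ∑ π2 : EdgeSocket n d2 ≃ EdgeSocket c2 g2,
         (numCodewords n c1 c2 d1 d2 g1 g2 π1 π2 : ℝ))
      = ∑ x : Fin n → ZMod 2,
          ((univ.filter (fun π1 : EdgeSocket n d1 ≃ EdgeSocket c1 g1 =>
              ∀ ch : Fin c1, ∑ s : Fin (g1 ch), x (π1.symm ⟨ch, s⟩).1 = 0)).card : ℝ) *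
          ((univ.filter (fun π2 : EdgeSocket n d2 ≃ EdgeSocket c2 g2 =>
              ∀ ch : Fin c2, ∑ s : Fin (g2 ch), x (π2.symm ⟨ch, s⟩).1 = 0)).card : ℝ) := by
  calc (∑ π1 : EdgeSocket n d1 ≃ EdgeSocket c1 g1,
       ∑ π2 : EdgeSocket n d2 ≃ EdgeSocket c2 g2,
         (numCodewords n c1 c2 d1 d2 g1 g2 π1 π2 : ℝ))
      = ∑ π1 : EdgeSocket n d1 ≃ EdgeSocket c1 g1,
        ∑ π2 : EdgeSocket n d2 ≃ EdgeSocket c2 g2,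
        ∑ x : Fin n → ZMod 2,
          (if ∀ ch : Fin c1, ∑ s : Fin (g1 ch), x (π1.symm ⟨ch, s⟩).1 = 0 then (1:ℝ) else 0) *
          (if ∀ ch : Fin c2, ∑ s : Fin (g2 ch), x (π2.symm ⟨ch, s⟩).1 = 0 then (1:ℝ) else 0) := by
        refine Finset.sum_congr rfl fun π1 _ => Finset.sum_congr rfl fun π2 _ => ?_
        rw [numCodewords, Finset.card_filter, Nat.cast_sum]
        refine Finset.sum_congr rfl fun x _ => ?_
        by_cases hP : ∀ ch : Fin c1, ∑ s : Fin (g1 ch), x (π1.symm ⟨ch, s⟩).1 = 0 <;>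
          by_cases hQ : ∀ ch : Fin c2, ∑ s : Fin (g2 ch), x (π2.symm ⟨ch, s⟩).1 = 0 <;>
          simp [hP, hQ]
    _ = ∑ x : Fin n → ZMod 2,
        ∑ π1 : EdgeSocket n d1 ≃ EdgeSocket c1 g1,
        ∑ π2 : EdgeSocket n d2 ≃ EdgeSocket c2 g2,
          (if ∀ ch : Fin c1, ∑ s : Fin (g1 ch), x (π1.symm ⟨ch, s⟩).1 = 0 then (1:ℝ) else 0) *
          (if ∀ ch : Fin c2, ∑ s : Fin (g2 ch), x (π2.symm ⟨ch, s⟩).1 = 0 then (1:ℝ) else 0) := by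
        exact Eq.trans (Finset.sum_congr rfl fun π1 _ => Finset.sum_comm) Finset.sum_comm
    _ = ∑ x : Fin n → ZMod 2,
        (∑ π1 : EdgeSocket n d1 ≃ EdgeSocket c1 g1,
          if ∀ ch : Fin c1, ∑ s : Fin (g1 ch), x (π1.symm ⟨ch, s⟩).1 = 0 then (1:ℝ) else 0) *
        (∑ π2 : EdgeSocket n d2 ≃ EdgeSocket c2 g2,
          if ∀ ch : Fin c2, ∑ s : Fin (g2 ch), x (π2.symm ⟨ch, s⟩).1 = 0 then (1:ℝ) else 0) := by
        exact Finset.sum_congr rfl fun x _ => (Finset.sum_mul_sum _ _ _ _).symm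
    _ = _ := by
        refine Finset.sum_congr rfl fun x _ => ?_
        rw [Finset.sum_boole, Finset.sum_boole]

lemma double_ite_sum (T1 T2 a b : ℕ) (F : ℕ → ℕ → ℝ) (ha : a ≤ T1) (hb : b ≤ T2) :
    (∑ E1 ∈ Finset.range (T1+1), ∑ E2 ∈ Finset.range (T2+1),
        (if a = E1 ∧ b = E2 then (1:ℝ) else 0) * F E1 E2) = F a b := by
  have h1 : a ∈ Finset.range (T1+1) := Finset.mem_range.2 (Nat.lt_succ_of_le ha)
  have h2 : b ∈ Finset.range (T2+1) := Finset.mem_range.2 (Nat.lt_succ_of_le hb)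
  calc (∑ E1 ∈ Finset.range (T1+1), ∑ E2 ∈ Finset.range (T2+1),
        (if a = E1 ∧ b = E2 then (1:ℝ) else 0) * F E1 E2)
      = ∑ E1 ∈ Finset.range (T1+1),
          (if a = E1 then ∑ E2 ∈ Finset.range (T2+1),
            (if b = E2 then F E1 E2 else 0) else 0) := by
        refine Finset.sum_congr rfl fun E1 _ => ?_
        by_cases hE1 : a = E1
        · rw [if_pos hE1]
          refine Finset.sum_congr rfl fun E2 _ => ?_
          by_cases hE2 : b = E2 <;> simp [hE1, hE2]
        · rw [if_neg hE1]
          refine Finset.sum_eq_zero fun E2 _ => by simp [hE1]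
    _ = ∑ E1 ∈ Finset.range (T1+1), (if a = E1 then F E1 b else 0) := by
        refine Finset.sum_congr rfl fun E1 _ => ?_
        by_cases hE1 : a = E1
        · rw [if_pos hE1, if_pos hE1, Finset.sum_ite_eq, if_pos h2]
        · rw [if_neg hE1, if_neg hE1]
    _ = F a b := by rw [Finset.sum_ite_eq, if_pos h1]

lemma perA (T1 T2 a b N1 N2 : ℕ) (ha : a ≤ T1) (hb : b ≤ T2) :
    ((N1:ℝ) * a.factorial * (T1-a).factorial) * ((N2:ℝ) * b.factorial * (T2-b).factorial)
        / ((T1.factorial : ℝ) * (T2.factorial : ℝ))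
      = (N1 : ℝ) * (N2 : ℝ) / ((T1.choose a : ℝ) * (T2.choose b : ℝ)) := by
  rw [← div_mul_div_comm, frac_id _ _ _ ha, frac_id _ _ _ hb, div_mul_div_comm]

/-- The expected number of codewords of the two edge type LDPC ensemble
(uniform independent matchings of type-one and type-two sockets) equals
`Σ_{E1,E2} coef[Π_v (1 + u1^{d1 v} u2^{d2 v}); u1^{E1} u2^{E2}] ·
coef[Π_c q_{g1 c}(v1) · Π_c q_{g2 c}(v2); v1^{E1} v2^{E2}] / (C(T1,E1) C(T2,E2))`,
where `T_j` is the total number of type-`j` edges.  (Grouping variable nodes by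
degree profile `(l1,l2)` and check nodes by degree `r` recovers the products
`Π_{l1,l2}(1+u1^{l1}u2^{l2})^{nΛ_{l1l2}}` and `Π_r q_r(v_j)^{m_j Γ^{(j)}_r}`.) -/
theorem average_number_of_codewords
    (n c1 c2 : ℕ) (d1 d2 : Fin n → ℕ) (g1 : Fin c1 → ℕ) (g2 : Fin c2 → ℕ)
    (hT1 : ∑ v, d1 v = ∑ c, g1 c) (hT2 : ∑ v, d2 v = ∑ c, g2 c) :
    (let T1 := ∑ v, d1 v
     let T2 := ∑ v, d2 v
     ((∑ π1 : EdgeSocket n d1 ≃ EdgeSocket c1 g1,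
        ∑ π2 : EdgeSocket n d2 ≃ EdgeSocket c2 g2,
          (numCodewords n c1 c2 d1 d2 g1 g2 π1 π2 : ℝ)) /
       ((Fintype.card (EdgeSocket n d1 ≃ EdgeSocket c1 g1) : ℝ) *
        (Fintype.card (EdgeSocket n d2 ≃ EdgeSocket c2 g2) : ℝ)))
     = ∑ E1 ∈ Finset.range (T1 + 1), ∑ E2 ∈ Finset.range (T2 + 1),
         MvPolynomial.coeff (mono2 E1 E2)
             (∏ v : Fin n, (1 + MvPolynomial.X 0 ^ d1 v * MvPolynomial.X 1 ^ d2 v)) *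
           (MvPolynomial.coeff (mono2 E1 E2)
               ((∏ c : Fin c1, qMv (g1 c) 0) * (∏ c : Fin c2, qMv (g2 c) 1)) /
             ((T1.choose E1 : ℝ) * (T2.choose E2 : ℝ)))) := by
  dsimp only
  have hcard1 : Fintype.card (EdgeSocket n d1 ≃ EdgeSocket c1 g1) = (∑ v, d1 v).factorial := by
    have hc : Fintype.card (EdgeSocket n d1) = Fintype.card (EdgeSocket c1 g1) := by
      simp only [Fintype.card_sigma, Fintype.card_fin]; rw [← hT1]
    rw [Fintype.card_equiv (Fintype.equivOfCardEq hc)]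
    simp only [Fintype.card_sigma, Fintype.card_fin]
  have hcard2 : Fintype.card (EdgeSocket n d2 ≃ EdgeSocket c2 g2) = (∑ v, d2 v).factorial := by
    have hc : Fintype.card (EdgeSocket n d2) = Fintype.card (EdgeSocket c2 g2) := by
      simp only [Fintype.card_sigma, Fintype.card_fin]; rw [← hT2]
    rw [Fintype.card_equiv (Fintype.equivOfCardEq hc)]
    simp only [Fintype.card_sigma, Fintype.card_fin]
  rw [numerator_swap, hcard1, hcard2]
  have hGC : ∀ x : Fin n → ZMod 2,
      ((univ.filter (fun π1 : EdgeSocket n d1 ≃ EdgeSocket c1 g1 =>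
          ∀ ch : Fin c1, ∑ s : Fin (g1 ch), x (π1.symm ⟨ch, s⟩).1 = 0)).card : ℝ) *
      ((univ.filter (fun π2 : EdgeSocket n d2 ≃ EdgeSocket c2 g2 =>
          ∀ ch : Fin c2, ∑ s : Fin (g2 ch), x (π2.symm ⟨ch, s⟩).1 = 0)).card : ℝ)
      = ((NE c1 g1 (∑ v ∈ univ.filter (fun v => x v = 1), d1 v) : ℝ)
          * (∑ v ∈ univ.filter (fun v => x v = 1), d1 v).factorial
          * ((∑ v, d1 v) - ∑ v ∈ univ.filter (fun v => x v = 1), d1 v).factorial) *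
        ((NE c2 g2 (∑ v ∈ univ.filter (fun v => x v = 1), d2 v) : ℝ)
          * (∑ v ∈ univ.filter (fun v => x v = 1), d2 v).factorial
          * ((∑ v, d2 v) - ∑ v ∈ univ.filter (fun v => x v = 1), d2 v).factorial) := by
    intro x
    rw [good_count d1 g1 x hT1, good_count d2 g2 x hT2]
    push_cast
    ring
  rw [Finset.sum_congr rfl fun x _ => hGC x]
  rw [sum_zmod_reindex (fun A =>
    ((NE c1 g1 (∑ v ∈ A, d1 v) : ℝ) * (∑ v ∈ A, d1 v).factorial
        * ((∑ v, d1 v) - ∑ v ∈ A, d1 v).factorial) *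
    ((NE c2 g2 (∑ v ∈ A, d2 v) : ℝ) * (∑ v ∈ A, d2 v).factorial
        * ((∑ v, d2 v) - ∑ v ∈ A, d2 v).factorial))]
  rw [Finset.sum_div]
  calc (∑ A ∈ (univ : Finset (Fin n)).powerset,
        (((NE c1 g1 (∑ v ∈ A, d1 v) : ℝ) * (∑ v ∈ A, d1 v).factorial
            * ((∑ v, d1 v) - ∑ v ∈ A, d1 v).factorial) *
         ((NE c2 g2 (∑ v ∈ A, d2 v) : ℝ) * (∑ v ∈ A, d2 v).factorial
            * ((∑ v, d2 v) - ∑ v ∈ A, d2 v).factorial))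
          / (((∑ v, d1 v).factorial : ℝ) * ((∑ v, d2 v).factorial : ℝ)))
      = ∑ A ∈ (univ : Finset (Fin n)).powerset,
          (NE c1 g1 (∑ v ∈ A, d1 v) : ℝ) * (NE c2 g2 (∑ v ∈ A, d2 v) : ℝ) /
            (((∑ v, d1 v).choose (∑ v ∈ A, d1 v) : ℝ) *
             ((∑ v, d2 v).choose (∑ v ∈ A, d2 v) : ℝ)) := by
        refine Finset.sum_congr rfl fun A _ => ?_
        exact perA _ _ _ _ _ _ (Finset.sum_le_sum_of_subset (Finset.subset_univ A))
          (Finset.sum_le_sum_of_subset (Finset.subset_univ A))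
    _ = ∑ A ∈ (univ : Finset (Fin n)).powerset,
          ∑ E1 ∈ Finset.range ((∑ v, d1 v) + 1), ∑ E2 ∈ Finset.range ((∑ v, d2 v) + 1),
            (if (∑ v ∈ A, d1 v) = E1 ∧ (∑ v ∈ A, d2 v) = E2 then (1:ℝ) else 0) *
            ((NE c1 g1 E1 : ℝ) * (NE c2 g2 E2 : ℝ) /
              (((∑ v, d1 v).choose E1 : ℝ) * ((∑ v, d2 v).choose E2 : ℝ))) := by
        refine Finset.sum_congr rfl fun A _ => ?_
        exact (double_ite_sum _ _ _ _
          (fun E1 E2 => (NE c1 g1 E1 : ℝ) * (NE c2 g2 E2 : ℝ) /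
            (((∑ v, d1 v).choose E1 : ℝ) * ((∑ v, d2 v).choose E2 : ℝ)))
          (Finset.sum_le_sum_of_subset (Finset.subset_univ A))
          (Finset.sum_le_sum_of_subset (Finset.subset_univ A))).symm
    _ = ∑ E1 ∈ Finset.range ((∑ v, d1 v) + 1), ∑ E2 ∈ Finset.range ((∑ v, d2 v) + 1),
          ∑ A ∈ (univ : Finset (Fin n)).powerset,
            (if (∑ v ∈ A, d1 v) = E1 ∧ (∑ v ∈ A, d2 v) = E2 then (1:ℝ) else 0) *
            ((NE c1 g1 E1 : ℝ) * (NE c2 g2 E2 : ℝ) /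
              (((∑ v, d1 v).choose E1 : ℝ) * ((∑ v, d2 v).choose E2 : ℝ))) := by
        exact Eq.trans Finset.sum_comm (Finset.sum_congr rfl fun E1 _ => Finset.sum_comm)
    _ = ∑ E1 ∈ Finset.range ((∑ v, d1 v) + 1), ∑ E2 ∈ Finset.range ((∑ v, d2 v) + 1),
         MvPolynomial.coeff (mono2 E1 E2)
             (∏ v : Fin n, (1 + MvPolynomial.X 0 ^ d1 v * MvPolynomial.X 1 ^ d2 v)) *
           (MvPolynomial.coeff (mono2 E1 E2)
               ((∏ c : Fin c1, qMv (g1 c) 0) * (∏ c : Fin c2, qMv (g2 c) 1)) /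
             (((∑ v, d1 v).choose E1 : ℝ) * ((∑ v, d2 v).choose E2 : ℝ))) := by
        refine Finset.sum_congr rfl fun E1 _ => Finset.sum_congr rfl fun E2 _ => ?_
        rw [varProd_coeff, coeff_checkProd, ← Finset.sum_boole, Finset.sum_mul]
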